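/- Let h be differentiable on a real inner product space, φ the golden ratio, and suppose ∇h(b̄_{k+1}) = ((φ−1)/φ)∇h(w_{k+1}) + (1/φ)∇h(b̄_k). Then B_h(w_{k+1}, b̄_{k+1}) ≤ (1/φ) B_h(w_{k+1}, b̄_k), provided h is convex (so that all Bregman distances are nonnegative). -/

import Mathlib

open scoped RealInnerProductSpace

lemma grad_ineq_aux {H : Type*} [NormedAddCommGroup H] [InnerProductSpace ℝ H] [CompleteSpace H]
    (h : H → ℝ) (G : H → H) (hdiff : ∀ x, HasGradientAt h (G x) x)
    (hconv : ConvexOn ℝ Set.univ h) (x y : H) :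
    ⟪G x, y - x⟫ ≤ h y - h x := by
  set c : ℝ → H := fun t => x + t • (y - x) with hc
  have hcx : c 0 = x := by simp [hc]
  have hcy : c 1 = y := by simp [hc]
  have hcd : HasDerivAt c (y - x) 0 := by
    simpa [hc] using ((hasDerivAt_id (0:ℝ)).smul_const (y - x)).const_add x
  have hfd : HasFDerivAt h (InnerProductSpace.toDual ℝ H (G x)) x := (hdiff x).hasFDerivAt
  have hfd' : HasFDerivAt h (InnerProductSpace.toDual ℝ H (G x)) (c 0) := by
    rw [hcx]; exact hfd
  have hderiv : HasDerivAt (h ∘ c) ⟪G x, y - x⟫ 0 := by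
    have := hfd'.comp_hasDerivAt (0:ℝ) hcd
    simpa [InnerProductSpace.toDual_apply_apply] using this
  have hconv' : ConvexOn ℝ Set.univ (h ∘ c) := by
    have : c = fun t => AffineMap.lineMap x y t := by
      funext t; simp [hc, AffineMap.lineMap_apply, smul_sub]; abel
    rw [this]
    have := hconv.comp_affineMap (AffineMap.lineMap x y : ℝ →ᵃ[ℝ] H)
    simpa using this.subset (Set.subset_univ _) convex_univ
  have := hconv'.le_slope_of_hasDerivAt (Set.mem_univ (0:ℝ)) (Set.mem_univ (1:ℝ))
    one_pos hderiv
  have hslope : slope (h ∘ c) 0 1 = h y - h x := by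
    simp [slope_def_field, hcx, hcy, Function.comp]
  rw [hslope] at this
  exact this

theorem stmt_15 {H : Type*} [NormedAddCommGroup H] [InnerProductSpace ℝ H] [CompleteSpace H]
    (h : H → ℝ) (G : H → H) (hdiff : ∀ x, HasGradientAt h (G x) x)
    (hconv : ConvexOn ℝ Set.univ h)
    (B : H → H → ℝ) (hB : ∀ a b, B a b = h a - h b - ⟪G b, a - b⟫)
    (φ : ℝ) (hφ : φ = (Real.sqrt 5 + 1) / 2)
    (wk1 bk bk1 : H)
    (hgrad : G bk1 = ((φ - 1) / φ) • G wk1 + (1 / φ) • G bk) :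
    B wk1 bk1 ≤ (1 / φ) * B wk1 bk := by
  have hs5 : Real.sqrt 5 ^ 2 = 5 := Real.sq_sqrt (by norm_num)
  have hs5n : 0 ≤ Real.sqrt 5 := Real.sqrt_nonneg 5
  have hφ1 : 1 < φ := by rw [hφ]; nlinarith
  have hφ0 : 0 < φ := lt_trans one_pos hφ1
  set α : ℝ := (φ - 1) / φ with hα'
  set β : ℝ := 1 / φ with hβ'
  have hαβ : α + β = 1 := by rw [hα', hβ']; field_simp; ring
  have hα : 0 ≤ α := by rw [hα']; exact div_nonneg (by linarith) hφ0.le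
  have hβ : 0 ≤ β := by rw [hβ']; positivity
  have h1 : ⟪G wk1, bk1 - wk1⟫ ≤ h bk1 - h wk1 := grad_ineq_aux h G hdiff hconv wk1 bk1
  have h2 : ⟪G bk, bk1 - bk⟫ ≤ h bk1 - h bk := grad_ineq_aux h G hdiff hconv bk bk1
  have e1 : ⟪G bk1, wk1 - bk1⟫ = α * ⟪G wk1, wk1 - bk1⟫ + β * ⟪G bk, wk1 - bk1⟫ := by
    rw [hgrad]; simp [inner_add_left, real_inner_smul_left]
  have e2 : ⟪G wk1, wk1 - bk1⟫ = -⟪G wk1, bk1 - wk1⟫ := by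
    rw [← inner_neg_right]; congr 1; abel
  have e3 : ⟪G bk, wk1 - bk1⟫ = ⟪G bk, wk1 - bk⟫ - ⟪G bk, bk1 - bk⟫ := by
    rw [← inner_sub_right]; congr 1; abel
  have key1 : α * ⟪G wk1, bk1 - wk1⟫ ≤ α * (h bk1 - h wk1) := mul_le_mul_of_nonneg_left h1 hα
  have key2 : β * ⟪G bk, bk1 - bk⟫ ≤ β * (h bk1 - h bk) := mul_le_mul_of_nonneg_left h2 hβ
  have p1 : α * h wk1 + β * h wk1 = h wk1 := by rw [← add_mul, hαβ, one_mul]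
  have p2 : α * h bk1 + β * h bk1 = h bk1 := by rw [← add_mul, hαβ, one_mul]
  rw [hB, hB, e1, e2, e3]
  linarith [key1, key2, p1, p2]
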